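/- Finite-point structure (Lemma 1): Assume the weights Q_1, …, Q_K are pairwise distinct. If p* ∈ D is a global maximizer of F over D, then for every k ∈ {1, …, K} the partial sum S_k(p*) = p*_1 + ⋯ + p*_k belongs to the finite candidate set E = {0, P_max} ∪ {η(g_j Q_j − g_i Q_i)/(g_i g_j (Q_i − Q_j)) : 1 ≤ i < j ≤ K} ∪ {Q_i/Z − η/g_i : 1 ≤ i ≤ K}. -/

import Mathlib

open Finset

/-- Prefix sum `S_k(p) = p_1 + ⋯ + p_k` (0-based: sum of the first `k` coordinates). -/
noncomputable def Sfun (K : ℕ) (p : Fin K → ℝ) (k : ℕ) : ℝ :=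
  ∑ j : Fin K, if (j : ℕ) < k then p j else 0

/-- The NOMA objective `F`. -/
noncomputable def Fobj (K : ℕ) (g Q : Fin K → ℝ) (η Z : ℝ) (p : Fin K → ℝ) : ℝ :=
  (∑ k : Fin K, Q k * Real.log (1 + p k * g k / (Sfun K p (k : ℕ) * g k + η)))
    - Z * Sfun K p K

/-- The feasible set `D`. -/
def Dfeas (K : ℕ) (Pmax : ℝ) : Set (Fin K → ℝ) :=
  {p | (∀ k, 0 ≤ p k) ∧ Sfun K p K ≤ Pmax}

/-- The finite candidate set `E`. -/
def Ecand (K : ℕ) (g Q : Fin K → ℝ) (η Z Pmax : ℝ) : Set ℝ :=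
  ({0, Pmax} : Set ℝ)
    ∪ {x | ∃ i j : Fin K, i < j ∧
        x = η * (g j * Q j - g i * Q i) / (g i * g j * (Q i - Q j))}
    ∪ {x | ∃ i : Fin K, x = Q i / Z - η / g i}

/-- Indicator (as a real number) of `a ≤ n ≤ b`. -/
noncomputable def eInd (a b n : ℕ) : ℝ := if a ≤ n ∧ n ≤ b then 1 else 0

section Aux

variable {K : ℕ}

lemma Sfun_zero (p : Fin K → ℝ) : Sfun K p 0 = 0 := by
  simp [Sfun]

lemma sum_ite_coe (v : Fin K → ℝ) {c : ℕ} (hc : c < K) :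
    (∑ j : Fin K, if (j : ℕ) = c then v j else 0) = v ⟨c, hc⟩ := by
  rw [Finset.sum_eq_single (⟨c, hc⟩ : Fin K)]
  · simp
  · intro j _ hj
    have : (j : ℕ) ≠ c := fun h => hj (Fin.ext h)
    simp [this]
  · simp

lemma sum_ite_coe_zero (v : Fin K → ℝ) {c : ℕ} (hc : K ≤ c) :
    (∑ j : Fin K, if (j : ℕ) = c then v j else 0) = 0 := by
  apply Finset.sum_eq_zero
  intro j _
  have : (j : ℕ) ≠ c := by have := j.isLt; omega
  simp [this]

lemma Sfun_succ (p : Fin K → ℝ) {n : ℕ} (hn : n < K) :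
    Sfun K p (n + 1) = Sfun K p n + p ⟨n, hn⟩ := by
  unfold Sfun
  have h : ∀ j : Fin K, (if (j : ℕ) < n + 1 then p j else 0)
      = (if (j : ℕ) < n then p j else 0) + (if (j : ℕ) = n then p j else 0) := by
    intro j; split_ifs <;> first | ring1 | (exfalso; omega)
  rw [Finset.sum_congr rfl (fun j _ => h j), Finset.sum_add_distrib, sum_ite_coe p hn]

lemma Sfun_mono (p : Fin K → ℝ) (hp : ∀ j, 0 ≤ p j) {m n : ℕ} (h : m ≤ n) :
    Sfun K p m ≤ Sfun K p n := by
  apply Finset.sum_le_sum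
  intro j _
  split_ifs <;> first | exact le_rfl | (exfalso; omega) | exact hp j

lemma Sfun_nonneg (p : Fin K → ℝ) (hp : ∀ j, 0 ≤ p j) (n : ℕ) : 0 ≤ Sfun K p n := by
  have := Sfun_mono p hp (Nat.zero_le n)
  rwa [Sfun_zero] at this

lemma Fobj_eq (g Q : Fin K → ℝ) (η Z : ℝ) (hη : 0 < η) (hgpos : ∀ i, 0 < g i)
    (p : Fin K → ℝ) (hp : ∀ j, 0 ≤ p j) :
    Fobj K g Q η Z p
      = (∑ m : Fin K, Q m * (Real.log (Sfun K p ((m : ℕ) + 1) * g m + η)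
          - Real.log (Sfun K p (m : ℕ) * g m + η))) - Z * Sfun K p K := by
  unfold Fobj
  congr 1
  apply Finset.sum_congr rfl
  intro m _
  have h0 : 0 ≤ Sfun K p (m : ℕ) := Sfun_nonneg p hp _
  have hpos : 0 < Sfun K p (m : ℕ) * g m + η :=
    add_pos_of_nonneg_of_pos (mul_nonneg h0 (hgpos m).le) hη
  have hsucc : Sfun K p ((m : ℕ) + 1) = Sfun K p (m : ℕ) + p m := by
    rw [Sfun_succ p m.isLt]
  have hpos1 : 0 < Sfun K p ((m : ℕ) + 1) * g m + η := by
    rw [hsucc]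
    exact add_pos_of_nonneg_of_pos (mul_nonneg (add_nonneg h0 (hp m)) (hgpos m).le) hη
  have harg : 1 + p m * g m / (Sfun K p (m : ℕ) * g m + η)
      = (Sfun K p ((m : ℕ) + 1) * g m + η) / (Sfun K p (m : ℕ) * g m + η) := by
    rw [hsucc]
    rw [eq_div_iff hpos.ne', add_mul (1:ℝ), one_mul, div_mul_cancel₀ _ hpos.ne']
    ring
  rw [harg, Real.log_div hpos1.ne' hpos.ne']

/-- Core stationarity lemma: at a maximal block `[a, b]` of constant partial sum,
the common value lies in the candidate set. -/
lemma crit (K : ℕ) (g Q : Fin K → ℝ) (η Z Pmax : ℝ)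
    (hgpos : ∀ i, 0 < g i) (hQdist : ∀ i j : Fin K, i ≠ j → Q i ≠ Q j)
    (hη : 0 < η) (hZ : 0 < Z)
    (pstar : Fin K → ℝ) (hp0 : ∀ j, 0 ≤ pstar j) (hpP : Sfun K pstar K ≤ Pmax)
    (hopt : ∀ q ∈ Dfeas K Pmax, Fobj K g Q η Z q ≤ Fobj K g Q η Z pstar)
    (a b : ℕ) (ha1 : 1 ≤ a) (hab : a ≤ b) (hbK : b ≤ K)
    (hblock : ∀ n, a ≤ n → n ≤ b → Sfun K pstar n = Sfun K pstar a)
    (hlow : Sfun K pstar (a - 1) < Sfun K pstar a)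
    (hhigh : Sfun K pstar a < (if b < K then Sfun K pstar (b + 1) else Pmax)) :
    Sfun K pstar a ∈ Ecand K g Q η Z Pmax := by
  classical
  set S : ℕ → ℝ := Sfun K pstar with hSdef
  set t : ℝ := S a with htdef
  have haK : a - 1 < K := by omega
  set ia : Fin K := ⟨a - 1, haK⟩ with hiadef
  have hSmono : ∀ {m n : ℕ}, m ≤ n → S m ≤ S n := fun h => Sfun_mono pstar hp0 h
  have hSnn : ∀ n, 0 ≤ S n := fun n => Sfun_nonneg pstar hp0 n
  have htnn : 0 ≤ t := hSnn a
  have hpa : pstar ia = t - S (a - 1) := by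
    have h1 : S ((a - 1) + 1) = S (a - 1) + pstar ia := Sfun_succ pstar haK
    have h2 : a - 1 + 1 = a := by omega
    rw [h2] at h1
    rw [← htdef] at h1
    linarith
  set u : ℝ := (if b < K then S (b + 1) else Pmax) with hudef
  have hu : t < u := hhigh
  set q : ℝ → Fin K → ℝ := fun ε m =>
    pstar m + (if (m : ℕ) = a - 1 then ε else 0) - (if (m : ℕ) = b then ε else 0) with hqdef
  have hq0 : q 0 = pstar := by
    funext m; simp [hqdef]
  have hSq : ∀ ε : ℝ, ∀ n : ℕ, n ≤ K →
      Sfun K (q ε) n = S n + (if a ≤ n ∧ n ≤ b then ε else 0) := by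
    intro ε n hn
    have hterm : ∀ j : Fin K, (if (j : ℕ) < n then q ε j else 0)
        = (if (j : ℕ) < n then pstar j else 0)
          + (if ((j : ℕ) = a - 1 ∧ a - 1 < n) then ε else 0)
          - (if ((j : ℕ) = b ∧ b < n) then ε else 0) := by
      intro j
      simp only [hqdef]
      split_ifs <;> first | ring1 | (exfalso; omega)
    have hstart : Sfun K (q ε) n = ∑ j : Fin K,
        ((if (j : ℕ) < n then pstar j else 0)
          + (if ((j : ℕ) = a - 1 ∧ a - 1 < n) then ε else 0)
          - (if ((j : ℕ) = b ∧ b < n) then ε else 0)) :=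
      Finset.sum_congr rfl (fun j _ => hterm j)
    rw [hstart, Finset.sum_sub_distrib, Finset.sum_add_distrib]
    have hA : (∑ j : Fin K, if ((j : ℕ) = a - 1 ∧ a - 1 < n) then ε else 0)
        = (if a - 1 < n then ε else 0) := by
      have h1 : ∀ j : Fin K, (if ((j : ℕ) = a - 1 ∧ a - 1 < n) then ε else 0)
          = (if (j : ℕ) = a - 1 then (if a - 1 < n then ε else 0) else 0) := by
        intro j
        by_cases hj : (j : ℕ) = a - 1 <;> simp [hj]
      rw [Finset.sum_congr rfl (fun j _ => h1 j), sum_ite_coe _ haK]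
    have hB : (∑ j : Fin K, if ((j : ℕ) = b ∧ b < n) then ε else 0)
        = (if (b < n ∧ b < K) then ε else 0) := by
      have h1 : ∀ j : Fin K, (if ((j : ℕ) = b ∧ b < n) then ε else 0)
          = (if (j : ℕ) = b then (if b < n then ε else 0) else 0) := by
        intro j
        by_cases hj : (j : ℕ) = b <;> simp [hj]
      rw [Finset.sum_congr rfl (fun j _ => h1 j)]
      by_cases hbK' : b < K
      · rw [sum_ite_coe _ hbK']
        split_ifs <;> first | rfl | (exfalso; omega)
      · rw [sum_ite_coe_zero _ (by omega)]
        split_ifs <;> first | rfl | (exfalso; omega)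
    rw [hA, hB]
    have : (∑ j : Fin K, if (j : ℕ) < n then pstar j else 0) = S n := rfl
    rw [this]
    split_ifs <;> first | ring1 | (exfalso; omega)
  -- feasibility of the perturbation
  have hfeasq : ∀ ε ∈ Set.Ioo (S (a - 1) - t) (u - t), q ε ∈ Dfeas K Pmax := by
    intro ε hε
    obtain ⟨hε1, hε2⟩ := hε
    constructor
    · intro m
      rcases eq_or_ne ((m : ℕ)) (a - 1) with hm | hm
      · have hmb : (m : ℕ) ≠ b := by omega
        have hmia : m = ia := Fin.ext hm
        have hv : q ε m = pstar ia + ε := by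
          simp [hqdef, hm, hmb, hmia, hiadef, (show a - 1 ≠ b by omega)]
        rw [hv, hpa]
        linarith
      · rcases eq_or_ne ((m : ℕ)) b with hm2 | hm2
        · have hbK' : b < K := by have := m.isLt; omega
          have hmjb : m = (⟨b, hbK'⟩ : Fin K) := Fin.ext hm2
          have hpb : pstar (⟨b, hbK'⟩ : Fin K) = S (b + 1) - t := by
            have h1 : S (b + 1) = S b + pstar (⟨b, hbK'⟩ : Fin K) := Sfun_succ pstar hbK'
            have h2 : S b = t := hblock b hab le_rfl
            rw [h2] at h1
            linarith
          have hv : q ε m = pstar (⟨b, hbK'⟩ : Fin K) - ε := by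
            simp [hqdef, hm, hm2, hmjb, (show b ≠ a - 1 by omega)]
          rw [hv, hpb]
          have hu' : u = S (b + 1) := by rw [hudef, if_pos hbK']
          rw [hu'] at hε2
          linarith
        · have hv : q ε m = pstar m := by simp [hqdef, hm, hm2]
          rw [hv]; exact hp0 m
    · rw [hSq ε K le_rfl]
      by_cases hbK' : b < K
      · rw [if_neg (by omega)]
        simpa using hpP
      · have hbeq : b = K := by omega
        rw [if_pos (by omega)]
        have hSK : S K = t := hblock K (by omega) (by omega)
        have hu' : u = Pmax := by rw [hudef, if_neg hbK']
        rw [hu'] at hε2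
        rw [hSK]
        linarith
  -- the one-dimensional function and its derivative
  set h : ℝ → ℝ := fun ε =>
    (∑ m : Fin K, Q m * (Real.log ((S ((m : ℕ) + 1) + eInd a b ((m : ℕ) + 1) * ε) * g m + η)
      - Real.log ((S (m : ℕ) + eInd a b (m : ℕ) * ε) * g m + η)))
      - Z * (S K + eInd a b K * ε) with hhdef
  set D : ℝ :=
    (∑ m : Fin K, Q m * (eInd a b ((m : ℕ) + 1) * g m / (S ((m : ℕ) + 1) * g m + η)
      - eInd a b (m : ℕ) * g m / (S (m : ℕ) * g m + η)))
      - Z * eInd a b K with hDdef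
  have hhF : ∀ ε ∈ Set.Ioo (S (a - 1) - t) (u - t), h ε = Fobj K g Q η Z (q ε) := by
    intro ε hε
    have hq0' := (hfeasq ε hε).1
    rw [Fobj_eq g Q η Z hη hgpos (q ε) hq0']
    have hrw : ∀ n : ℕ, n ≤ K → Sfun K (q ε) n = S n + eInd a b n * ε := by
      intro n hn
      rw [hSq ε n hn]
      unfold eInd
      split_ifs <;> ring
    have hsumeq : (∑ m : Fin K, Q m * (Real.log (Sfun K (q ε) ((m : ℕ) + 1) * g m + η)
          - Real.log (Sfun K (q ε) (m : ℕ) * g m + η)))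
        = ∑ m : Fin K, Q m * (Real.log ((S ((m : ℕ) + 1) + eInd a b ((m : ℕ) + 1) * ε) * g m + η)
          - Real.log ((S (m : ℕ) + eInd a b (m : ℕ) * ε) * g m + η)) := by
      apply Finset.sum_congr rfl
      intro m _
      rw [hrw ((m : ℕ) + 1) (Nat.succ_le_of_lt m.isLt), hrw (m : ℕ) m.isLt.le]
    rw [hsumeq, hrw K le_rfl]
  have h0mem : (0 : ℝ) ∈ Set.Ioo (S (a - 1) - t) (u - t) := ⟨by linarith, by linarith⟩
  have hmax : IsLocalMax h 0 := by
    have hle : ∀ ε ∈ Set.Ioo (S (a - 1) - t) (u - t), h ε ≤ h 0 := by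
      intro ε hε
      rw [hhF ε hε, hhF 0 h0mem, hq0]
      exact hopt (q ε) (hfeasq ε hε)
    exact Filter.eventually_of_mem (isOpen_Ioo.mem_nhds h0mem) hle
  have hlog : ∀ (n : ℕ) (m : Fin K),
      HasDerivAt (fun ε : ℝ => Real.log ((S n + eInd a b n * ε) * g m + η))
        (eInd a b n * g m / (S n * g m + η)) 0 := by
    intro n m
    have hpos : 0 < S n * g m + η :=
      add_pos_of_nonneg_of_pos (mul_nonneg (hSnn n) (hgpos m).le) hη
    have h2 : HasDerivAt (fun ε : ℝ => S n + eInd a b n * ε) (eInd a b n) 0 := by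
      simpa using ((hasDerivAt_id (0 : ℝ)).const_mul (eInd a b n)).const_add (S n)
    have h1 : HasDerivAt (fun ε : ℝ => (S n + eInd a b n * ε) * g m + η)
        (eInd a b n * g m) 0 := (h2.mul_const (g m)).add_const η
    have h3 := h1.log (by simpa using hpos.ne')
    simpa using h3
  have hDeriv : HasDerivAt h D 0 := by
    have hsum : HasDerivAt (fun ε : ℝ =>
        ∑ m : Fin K, Q m * (Real.log ((S ((m : ℕ) + 1) + eInd a b ((m : ℕ) + 1) * ε) * g m + η)
          - Real.log ((S (m : ℕ) + eInd a b (m : ℕ) * ε) * g m + η)))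
        (∑ m : Fin K, Q m * (eInd a b ((m : ℕ) + 1) * g m / (S ((m : ℕ) + 1) * g m + η)
          - eInd a b (m : ℕ) * g m / (S (m : ℕ) * g m + η))) 0 := by
      apply HasDerivAt.fun_sum
      intro m _
      exact ((hlog ((m : ℕ) + 1) m).sub (hlog (m : ℕ) m)).const_mul (Q m)
    have h2 : HasDerivAt (fun ε : ℝ => S K + eInd a b K * ε) (eInd a b K) 0 := by
      simpa using ((hasDerivAt_id (0 : ℝ)).const_mul (eInd a b K)).const_add (S K)
    have hlin : HasDerivAt (fun ε : ℝ => Z * (S K + eInd a b K * ε)) (Z * eInd a b K) 0 :=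
      h2.const_mul Z
    exact hsum.sub hlin
  have hD0 : D = 0 := hmax.hasDerivAt_eq_zero hDeriv
  -- evaluate the derivative
  set w : Fin K → ℝ := fun m => Q m * g m / (t * g m + η) with hwdef
  have hterm2 : ∀ m : Fin K,
      Q m * (eInd a b ((m : ℕ) + 1) * g m / (S ((m : ℕ) + 1) * g m + η)
        - eInd a b (m : ℕ) * g m / (S (m : ℕ) * g m + η))
      = (if (m : ℕ) + 1 = a then w m else 0) - (if (m : ℕ) = b then w m else 0) := by
    intro m
    unfold eInd
    by_cases h1 : a ≤ (m : ℕ) + 1 ∧ (m : ℕ) + 1 ≤ b <;>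
      by_cases h2 : a ≤ (m : ℕ) ∧ (m : ℕ) ≤ b
    · have e1 : S ((m : ℕ) + 1) = t := by
        have := hblock ((m : ℕ) + 1) h1.1 h1.2; exact this
      have e2 : S (m : ℕ) = t := hblock (m : ℕ) h2.1 h2.2
      rw [if_pos h1, if_pos h2, e1, e2, if_neg (by omega), if_neg (by omega)]
      ring
    · have haeq : (m : ℕ) + 1 = a := by omega
      have e1 : S ((m : ℕ) + 1) = t := by rw [haeq]
      rw [if_pos h1, if_neg h2, if_pos haeq, if_neg (by omega), e1]
      simp only [hwdef]
      ring
    · have hbeq : (m : ℕ) = b := by omega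
      have e2 : S (m : ℕ) = t := hblock (m : ℕ) h2.1 h2.2
      rw [if_neg h1, if_pos h2, if_neg (by omega), if_pos hbeq, e2]
      simp only [hwdef]
      ring
    · rw [if_neg h1, if_neg h2, if_neg (by omega), if_neg (by omega)]
      ring
  have hsum1 : (∑ m : Fin K, if (m : ℕ) + 1 = a then w m else 0) = w ia := by
    have h1 : ∀ m : Fin K, (if (m : ℕ) + 1 = a then w m else 0)
        = (if (m : ℕ) = a - 1 then w m else 0) := by
      intro m; split_ifs <;> first | rfl | (exfalso; omega)
    rw [Finset.sum_congr rfl (fun m _ => h1 m), sum_ite_coe w haK]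
  have hDsum : D = w ia - (∑ m : Fin K, if (m : ℕ) = b then w m else 0) - Z * eInd a b K := by
    rw [hDdef, Finset.sum_congr rfl (fun m _ => hterm2 m), Finset.sum_sub_distrib, hsum1]
  have hposi : 0 < t * g ia + η :=
    add_pos_of_nonneg_of_pos (mul_nonneg htnn (hgpos ia).le) hη
  by_cases hbK' : b < K
  · -- interior block: pairwise stationarity equation
    set jb : Fin K := ⟨b, hbK'⟩ with hjbdef
    have hsum2 : (∑ m : Fin K, if (m : ℕ) = b then w m else 0) = w jb := sum_ite_coe w hbK'
    have heK : eInd a b K = 0 := by unfold eInd; rw [if_neg (by omega)]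
    have hww : w ia = w jb := by
      rw [hDsum, hsum2, heK] at hD0
      linarith
    have hposj : 0 < t * g jb + η :=
      add_pos_of_nonneg_of_pos (mul_nonneg htnn (hgpos jb).le) hη
    simp only [hwdef] at hww
    rw [div_eq_div_iff hposi.ne' hposj.ne'] at hww
    have hij : ia < jb := by
      rw [Fin.lt_def]
      simp only [hiadef, hjbdef]
      omega
    have hQne : Q ia ≠ Q jb := hQdist ia jb (Fin.ne_of_lt hij)
    have hden : g ia * g jb * (Q ia - Q jb) ≠ 0 :=
      mul_ne_zero (mul_ne_zero (hgpos ia).ne' (hgpos jb).ne') (sub_ne_zero.mpr hQne)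
    have hform : t = η * (g jb * Q jb - g ia * Q ia) / (g ia * g jb * (Q ia - Q jb)) := by
      rw [eq_div_iff hden]
      linear_combination hww
    show t ∈ Ecand K g Q η Z Pmax
    simp only [Ecand, Set.mem_union, Set.mem_insert_iff, Set.mem_singleton_iff,
      Set.mem_setOf_eq]
    exact Or.inl (Or.inr ⟨ia, jb, hij, hform⟩)
  · -- block reaches K: stationarity against the linear cost
    have hsum2 : (∑ m : Fin K, if (m : ℕ) = b then w m else 0) = 0 :=
      sum_ite_coe_zero w (by omega)
    have heK : eInd a b K = 1 := by unfold eInd; rw [if_pos (by omega)]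
    have hwZ : w ia = Z := by
      rw [hDsum, hsum2, heK] at hD0
      linarith
    simp only [hwdef] at hwZ
    rw [div_eq_iff hposi.ne'] at hwZ
    have hform : t = Q ia / Z - η / g ia := by
      have hgi : g ia ≠ 0 := (hgpos ia).ne'
      have hz : Z ≠ 0 := hZ.ne'
      field_simp
      linear_combination -hwZ
    show t ∈ Ecand K g Q η Z Pmax
    simp only [Ecand, Set.mem_union, Set.mem_insert_iff, Set.mem_singleton_iff,
      Set.mem_setOf_eq]
    exact Or.inr ⟨ia, hform⟩

end Aux

/-- **Finite-point structure (Lemma 1).** If `p*` is a global maximizer of `F` over `D`,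
then every partial sum `S_k(p*)`, `1 ≤ k ≤ K`, lies in the finite candidate set `E`. -/
theorem finite_point_structure
    (K : ℕ) (hK : 1 ≤ K) (g Q : Fin K → ℝ) (η Z Pmax : ℝ)
    (hg : ∀ i j : Fin K, i ≤ j → g j ≤ g i) (hgpos : ∀ i, 0 < g i)
    (hQpos : ∀ i, 0 < Q i) (hQdist : ∀ i j : Fin K, i ≠ j → Q i ≠ Q j)
    (hη : 0 < η) (hZ : 0 < Z) (hP : 0 < Pmax)
    (pstar : Fin K → ℝ) (hfeas : pstar ∈ Dfeas K Pmax)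
    (hopt : ∀ q ∈ Dfeas K Pmax, Fobj K g Q η Z q ≤ Fobj K g Q η Z pstar) :
    ∀ k : ℕ, 1 ≤ k → k ≤ K → Sfun K pstar k ∈ Ecand K g Q η Z Pmax := by
  classical
  obtain ⟨hp0, hpP⟩ := hfeas
  intro k hk1 hkK
  by_cases ht0 : Sfun K pstar k = 0
  · simp only [Ecand, Set.mem_union, Set.mem_insert_iff, Set.mem_singleton_iff,
      Set.mem_setOf_eq]
    exact Or.inl (Or.inl (Or.inl ht0))
  by_cases htP : Sfun K pstar k = Pmax
  · simp only [Ecand, Set.mem_union, Set.mem_insert_iff, Set.mem_singleton_iff,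
      Set.mem_setOf_eq]
    exact Or.inl (Or.inl (Or.inr htP))
  have hSmono : ∀ {m n : ℕ}, m ≤ n → Sfun K pstar m ≤ Sfun K pstar n :=
    fun h => Sfun_mono pstar hp0 h
  have htpos : 0 < Sfun K pstar k :=
    lt_of_le_of_ne (Sfun_nonneg pstar hp0 k) (Ne.symm ht0)
  have hex : ∃ m, Sfun K pstar m = Sfun K pstar k := ⟨k, rfl⟩
  set a := Nat.find hex with hadef
  have hSa : Sfun K pstar a = Sfun K pstar k := Nat.find_spec hex
  have hak : a ≤ k := Nat.find_min' hex rfl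
  have ha1 : 1 ≤ a := by
    rcases Nat.eq_zero_or_pos a with h | h
    · exfalso
      rw [h, Sfun_zero] at hSa
      exact ht0 hSa.symm
    · exact h
  have hlow : Sfun K pstar (a - 1) < Sfun K pstar a := by
    have hne : Sfun K pstar (a - 1) ≠ Sfun K pstar k := Nat.find_min hex (by omega)
    have hle : Sfun K pstar (a - 1) ≤ Sfun K pstar k := hSmono (by omega)
    rw [hSa]
    exact lt_of_le_of_ne hle hne
  set b := Nat.findGreatest (fun m => Sfun K pstar m = Sfun K pstar k) K with hbdef
  have hkb : k ≤ b := Nat.le_findGreatest hkK rfl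
  have hbK : b ≤ K := Nat.findGreatest_le K
  have hSb : Sfun K pstar b = Sfun K pstar k :=
    Nat.findGreatest_spec (P := fun m => Sfun K pstar m = Sfun K pstar k) hkK rfl
  have hblock : ∀ n, a ≤ n → n ≤ b → Sfun K pstar n = Sfun K pstar a := by
    intro n h1 h2
    have l1 : Sfun K pstar a ≤ Sfun K pstar n := hSmono h1
    have l2 : Sfun K pstar n ≤ Sfun K pstar b := hSmono h2
    rw [hSa]
    rw [hSb] at l2
    rw [hSa] at l1
    linarith
  have hhigh : Sfun K pstar a < (if b < K then Sfun K pstar (b + 1) else Pmax) := by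
    by_cases hb : b < K
    · rw [if_pos hb]
      have hne : Sfun K pstar (b + 1) ≠ Sfun K pstar k :=
        Nat.findGreatest_is_greatest (P := fun m => Sfun K pstar m = Sfun K pstar k)
          (Nat.lt_succ_self b) (by omega)
      have hge : Sfun K pstar k ≤ Sfun K pstar (b + 1) := by
        rw [← hSb]; exact hSmono (by omega)
      rw [hSa]
      exact lt_of_le_of_ne hge (Ne.symm hne)
    · rw [if_neg hb, hSa]
      exact lt_of_le_of_ne (le_trans (hSmono hkK) hpP) htP
  have hmem := crit K g Q η Z Pmax hgpos hQdist hη hZ pstar hp0 hpP hopt a b ha1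
    (by omega) hbK hblock hlow hhigh
  rw [← hSa]
  exact hmem
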